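/- arXiv:2407.02589 — 4 statements merged into one kernel-verified Lean document; each statement's English description precedes it below -/
import Mathlib

section
/- If d+2 points in ℝ^d are in general position (every d+1 of them are affinely independent), then the Radon partition is unique up to swapping the two sides: if (A, Aᶜ) and (B, Bᶜ) are both partitions whose parts have intersecting convex hulls, then B = A or B = Aᶜ. -/
open Finset

lemma exists_coeffs' {d : ℕ} {n : ℕ} (x : Fin n → EuclideanSpace ℝ (Fin d))
    (S : Set (Fin n)) (p : EuclideanSpace ℝ (Fin d))
    (hp : p ∈ convexHull ℝ (x '' S)) :
    ∃ f : Fin n → ℝ, (∀ i, 0 ≤ f i) ∧ (∀ i, i ∉ S → f i = 0) ∧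
      ∑ i, f i = 1 ∧ ∑ i, f i • x i = p := by
  rw [mem_convexHull_iff_exists_fintype] at hp
  obtain ⟨ι, _, w, z, hw0, hw1, hz, hx⟩ := hp
  choose g hgS hgx using fun i => (hz i : z i ∈ x '' S)
  classical
  refine ⟨fun k => ∑ i ∈ univ.filter (fun i => g i = k), w i, ?_, ?_, ?_, ?_⟩
  · intro k; exact Finset.sum_nonneg fun i _ => hw0 i
  · intro k hk
    apply Finset.sum_eq_zero
    intro i hi
    simp only [mem_filter] at hi
    exact absurd (hi.2 ▸ hgS i) hk
  · rw [← hw1, Finset.sum_fiberwise]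
  · rw [← hx, ← Finset.sum_fiberwise (univ : Finset ι) g (fun i => w i • z i)]
    refine Finset.sum_congr rfl fun k _ => ?_
    rw [Finset.sum_smul]
    refine Finset.sum_congr rfl fun i hi => ?_
    simp only [mem_filter] at hi
    rw [← hi.2, hgx]

theorem radon_partition_unique (d : ℕ) (x : Fin (d + 2) → EuclideanSpace ℝ (Fin d))
    (hgen : ∀ s : Finset (Fin (d + 2)), s.card = d + 1 →
      AffineIndependent ℝ (fun i : s => x i))
    (A B : Set (Fin (d + 2)))
    (hA : (convexHull ℝ (x '' A) ∩ convexHull ℝ (x '' Aᶜ)).Nonempty)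
    (hB : (convexHull ℝ (x '' B) ∩ convexHull ℝ (x '' Bᶜ)).Nonempty) :
    B = A ∨ B = Aᶜ := by
  classical
  -- key: any affine dependence with a zero coordinate is zero
  have key : ∀ c : Fin (d + 2) → ℝ, ∑ i, c i = 0 → ∑ i, c i • x i = 0 →
      ∀ i0, c i0 = 0 → ∀ i, c i = 0 := by
    intro c hc0 hcx i0 hci0 i
    by_cases hii : i = i0
    · rw [hii]; exact hci0
    have hscard : (univ.erase i0).card = d + 1 := by
      rw [Finset.card_erase_of_mem (Finset.mem_univ _), Finset.card_univ, Fintype.card_fin]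
      omega
    have hai := affineIndependent_iff.mp (hgen _ hscard) univ (fun j => c j)
    have e1 : ∑ j : ((univ.erase i0 : Finset (Fin (d+2))) : Type), c j = 0 := by
      rw [Finset.sum_coe_sort (univ.erase i0) c]
      have := Finset.add_sum_erase univ c (Finset.mem_univ i0)
      rw [hci0, zero_add] at this
      rw [this, hc0]
    have e2 : ∑ j : ((univ.erase i0 : Finset (Fin (d+2))) : Type), c j • x j = 0 := by
      rw [Finset.sum_coe_sort (univ.erase i0) (fun j => c j • x j)]
      have := Finset.add_sum_erase univ (fun j => c j • x j) (Finset.mem_univ i0)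
      simp only [hci0, zero_smul, zero_add] at this
      rw [this, hcx]
    exact hai e1 e2 ⟨i, Finset.mem_erase.mpr ⟨hii, Finset.mem_univ i⟩⟩ (Finset.mem_univ _)
  -- extract a signed dependence for each Radon partition
  have dep : ∀ S : Set (Fin (d + 2)),
      (convexHull ℝ (x '' S) ∩ convexHull ℝ (x '' Sᶜ)).Nonempty →
      ∃ c : Fin (d + 2) → ℝ, ∑ i, c i = 0 ∧ ∑ i, c i • x i = 0 ∧
        (∀ i, i ∈ S ↔ 0 < c i) ∧ (∀ i, c i ≠ 0) := by
    intro S ⟨p, hp1, hp2⟩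
    obtain ⟨a, ha0, haS, ha1, hax⟩ := exists_coeffs' x S p hp1
    obtain ⟨b, hb0, hbS, hb1, hbx⟩ := exists_coeffs' x Sᶜ p hp2
    set c : Fin (d+2) → ℝ := fun i => a i - b i with hc
    have hcsum : ∑ i, c i = 0 := by simp [hc, Finset.sum_sub_distrib, ha1, hb1]
    have hcx : ∑ i, c i • x i = 0 := by
      simp only [hc, sub_smul]
      rw [Finset.sum_sub_distrib, hax, hbx, sub_self]
    have hne : ∀ i, c i ≠ 0 := by
      intro i hi
      have hz : ∀ j, c j = 0 := key c hcsum hcx i hi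
      -- then a = b, but disjoint supports force a = 0, contradicting sum = 1
      have : ∀ j, a j = 0 := by
        intro j
        by_cases hj : j ∈ S
        · have := hz j
          have hbj : b j = 0 := hbS j (by simp [hj])
          simp [hc, hbj] at this
          -- c j = a j - b j = a j
          linarith [this]
        · exact haS j hj
      rw [Finset.sum_eq_zero (fun j _ => this j)] at ha1
      exact one_ne_zero ha1.symm
    refine ⟨c, hcsum, hcx, fun i => ?_, hne⟩
    constructor
    · intro hi
      have hbi : b i = 0 := hbS i (by simp [hi])
      have : c i = a i := by simp [hc, hbi]
      rcases lt_or_eq_of_le (ha0 i) with h | h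
      · rw [this]; exact h
      · exact absurd (this.trans h.symm) (hne i)
    · intro hci
      by_contra hi
      have hai : a i = 0 := haS i hi
      have : c i = -b i := by simp [hc, hai]
      have := hb0 i
      rw [show b i = -(c i) by linarith [congrArg Neg.neg ‹c i = -b i›]] at this
      linarith
  obtain ⟨c, hc0, hcx, hcS, hcne⟩ := dep A hA
  obtain ⟨e, he0, hex, heS, hene⟩ := dep B hB
  -- e = t • c with t = e 0 / c 0
  set t : ℝ := e 0 / c 0 with ht
  have hteq : ∀ i, e i = t * c i := by
    intro i
    have h0 : (fun j => e j - t * c j) 0 = 0 := by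
      simp [ht, div_mul_cancel₀ _ (hcne 0)]
    have hs : ∑ j, (e j - t * c j) = 0 := by
      rw [Finset.sum_sub_distrib, he0, ← Finset.mul_sum, hc0, mul_zero, sub_zero]
    have hx : ∑ j, (e j - t * c j) • x j = 0 := by
      simp only [sub_smul, mul_smul]
      rw [Finset.sum_sub_distrib, hex, ← Finset.smul_sum, hcx, smul_zero, sub_self]
    have := key _ hs hx 0 h0 i
    linarith
  have htne : t ≠ 0 := by
    intro h
    exact hene 0 (by rw [hteq 0, h, zero_mul])
  rcases lt_or_gt_of_ne htne with htneg | htpos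
  · right
    ext i
    rw [heS i, hteq i, Set.mem_compl_iff, hcS i]
    constructor
    · intro h hc
      nlinarith
    · intro h
      rcases lt_or_ge 0 (c i) with h' | h'
      · exact absurd h' h
      rcases lt_or_eq_of_le h' with h'' | h''
      · nlinarith
      · exact absurd h'' (hcne i)
  · left
    ext i
    rw [heS i, hteq i, hcS i]
    constructor
    · intro h
      rcases lt_or_ge 0 (c i) with h' | h'
      · exact h'
      · nlinarith
    · intro h; positivity
end

section
/- Let x : Fin n → ℝ^d and let M be the (d+1) × n matrix whose j-th column is x j with an extra coordinate equal to 1. If v is a nonzero vector in the kernel of M, then setting A = {i | v i ≥ 0} and B = {i | v i < 0}, the convex hulls of x '' A and x '' B intersect. -/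
theorem kernel_vector_gives_radon (d n : ℕ) (x : Fin n → EuclideanSpace ℝ (Fin d))
    (M : Matrix (Fin (d + 1)) (Fin n) ℝ)
    (hM : ∀ (i : Fin d) (j : Fin n), M i.castSucc j = x j i)
    (hM1 : ∀ j : Fin n, M (Fin.last d) j = 1)
    (v : Fin n → ℝ) (hv : M.mulVec v = 0) (hv0 : v ≠ 0) :
    (convexHull ℝ (x '' {i | 0 ≤ v i}) ∩ convexHull ℝ (x '' {i | v i < 0})).Nonempty := by
  classical
  set I : Finset (Fin n) := Finset.univ.filter (fun i => 0 ≤ v i) with hI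
  set J : Finset (Fin n) := Finset.univ.filter (fun i => v i < 0) with hJ
  -- sum of v is zero
  have hsum : ∑ j, v j = 0 := by
    have := congrFun hv (Fin.last d)
    simpa [Matrix.mulVec, dotProduct, hM1] using this
  -- sum of v j • x j is zero
  have hxsum : ∑ j, v j • x j = 0 := by
    ext i
    have := congrFun hv i.castSucc
    simp only [Matrix.mulVec, dotProduct, hM, Pi.zero_apply] at this
    have h2 : (∑ j, v j • x j) i = ∑ j, v j * x j i := by
      have h3 := map_sum (EuclideanSpace.proj (𝕜 := ℝ) i) (fun j => v j • x j) Finset.univ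
      simp only [PiLp.proj_apply, map_smul, smul_eq_mul] at h3
      exact h3
    rw [h2]
    rw [Finset.sum_congr rfl (fun j _ => mul_comm (v j) (x j i))]
    exact this
  have hIJ : Disjoint I J := by
    simp only [hI, hJ, Finset.disjoint_filter]
    intro i _ h1 h2
    exact absurd h2 (not_lt.2 h1)
  have hIJU : I ∪ J = Finset.univ := by
    ext i
    by_cases h : 0 ≤ v i <;> simp [hI, hJ, h, lt_of_not_ge, *]
  have hsplit : ∀ f : Fin n → ℝ, ∑ i ∈ I, f i + ∑ i ∈ J, f i = ∑ i, f i := by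
    intro f
    rw [← Finset.sum_union hIJ, hIJU]
  have hsplitx : ∑ i ∈ I, v i • x i + ∑ i ∈ J, v i • x i = 0 := by
    rw [← Finset.sum_union hIJ, hIJU]; exact hxsum
  set s : ℝ := ∑ i ∈ I, v i with hs
  have hs0 : 0 ≤ s := Finset.sum_nonneg (fun i hi => (Finset.mem_filter.1 hi).2)
  have hspos : 0 < s := by
    rcases hs0.lt_or_eq with h | h
    · exact h
    · exfalso
      -- s = 0, then sum over J is 0 too, so J empty, so all v i = 0
      have hJsum : ∑ i ∈ J, v i = 0 := by
        have h1 := hsplit v; rw [hsum] at h1; rw [hs] at h; linarith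
      have hJempty : ∀ i ∈ J, v i = 0 := by
        intro i hi
        have : ∑ j ∈ J, v j < 0 :=
          Finset.sum_neg (fun j hj => (Finset.mem_filter.1 hj).2) ⟨i, hi⟩
        linarith
      have : v = 0 := by
        funext i
        by_cases h1 : 0 ≤ v i
        · have hi : i ∈ I := Finset.mem_filter.2 ⟨Finset.mem_univ i, h1⟩
          have := (Finset.sum_eq_zero_iff_of_nonneg
            (fun j hj => (Finset.mem_filter.1 hj).2)).1 (by rw [hs] at h; exact h.symm) i hi
          exact this
        · exact hJempty i (Finset.mem_filter.2 ⟨Finset.mem_univ i, lt_of_not_ge h1⟩)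
      exact hv0 this
  have hJsum : ∑ i ∈ J, (-v i) = s := by
    have := hsplit v; rw [hsum] at this
    simp only [Finset.sum_neg_distrib]
    linarith
  -- the common point
  have hcm : I.centerMass v x = J.centerMass (fun i => -v i) x := by
    rw [Finset.centerMass, Finset.centerMass, ← hs, hJsum]
    congr 1
    have : ∑ i ∈ J, (-v i) • x i = ∑ i ∈ I, v i • x i := by
      simp only [neg_smul, Finset.sum_neg_distrib]
      rw [eq_comm, ← sub_eq_zero, sub_neg_eq_add]
      exact hsplitx
    rw [this]
  refine ⟨I.centerMass v x, ?_, ?_⟩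
  · apply Finset.centerMass_mem_convexHull I (fun i hi => (Finset.mem_filter.1 hi).2)
      (hs ▸ hspos)
    intro i hi
    exact Set.mem_image_of_mem x (Finset.mem_filter.1 hi).2
  · rw [hcm]
    apply Finset.centerMass_mem_convexHull J
      (fun i hi => le_of_lt (neg_pos.2 (Finset.mem_filter.1 hi).2)) (hJsum ▸ hspos)
    intro i hi
    exact Set.mem_image_of_mem x (Finset.mem_filter.1 hi).2
end

section
/- For n points in general position in ℝ^d (n ≥ d+1), the number of affine separations, i.e., unordered partitions {A, Aᶜ} of the index set such that some affine hyperplane strictly separates the two parts, equals ∑_{i=0}^{d} C(n-1, i). -/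
open scoped RealInnerProductSpace

namespace CoverAux

variable {E : Type*} [NormedAddCommGroup E] [InnerProductSpace ℝ E]

/-- Hand-rolled general position: every subset of size ≤ d is linearly independent. -/
def GP (d : ℕ) {n : ℕ} (y : Fin n → E) : Prop :=
  ∀ (t : Finset (Fin n)) (c : Fin n → ℝ), t.card ≤ d →
    ∑ i ∈ t, c i • y i = 0 → ∀ i ∈ t, c i = 0

/-- The set of (ordered) homogeneous linear separations. -/
def Sep {n : ℕ} (y : Fin n → E) : Set (Set (Fin n)) :=
  {A | ∃ w : E, (∀ i ∈ A, 0 < ⟪w, y i⟫) ∧ (∀ i ∉ A, ⟪w, y i⟫ < 0)}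

lemma perturb {n : ℕ} (y : Fin n → E) (A : Set (Fin n)) (w u : E)
    (h1 : ∀ i ∈ A, 0 < ⟪w, y i⟫) (h2 : ∀ i ∉ A, ⟪w, y i⟫ < 0) :
    ∃ ε : ℝ, 0 < ε ∧ ∀ δ : ℝ, |δ| < ε →
      (∀ i ∈ A, 0 < ⟪w + δ • u, y i⟫) ∧ (∀ i ∉ A, ⟪w + δ • u, y i⟫ < 0) := by
  have h : ∀ᶠ δ : ℝ in nhds 0, ∀ i : Fin n,
      (i ∈ A → 0 < ⟪w + δ • u, y i⟫) ∧ (i ∉ A → ⟪w + δ • u, y i⟫ < 0) := by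
    rw [Filter.eventually_all]
    intro i
    have hc : Continuous fun δ : ℝ => ⟪w + δ • u, y i⟫ := by
      have : (fun δ : ℝ => ⟪w + δ • u, y i⟫) = fun δ : ℝ => ⟪w, y i⟫ + δ * ⟪u, y i⟫ := by
        funext δ; simp [inner_add_left, real_inner_smul_left]
      rw [this]; fun_prop
    by_cases hi : i ∈ A
    · have h0 : 0 < ⟪w + (0:ℝ) • u, y i⟫ := by simpa using h1 i hi
      have := (hc.tendsto 0).eventually (eventually_gt_nhds h0)
      exact this.mono (fun δ hδ => ⟨fun _ => hδ, fun h' => absurd hi h'⟩)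
    · have h0 : ⟪w + (0:ℝ) • u, y i⟫ < 0 := by simpa using h2 i hi
      have := (hc.tendsto 0).eventually (eventually_lt_nhds h0)
      exact this.mono (fun δ hδ => ⟨fun h' => absurd h' hi, fun _ => hδ⟩)
  rw [Metric.eventually_nhds_iff] at h
  obtain ⟨ε, hε, hball⟩ := h
  refine ⟨ε, hε, fun δ hδ => ?_⟩
  have := hball (show dist δ 0 < ε by simpa [Real.dist_eq] using hδ)
  exact ⟨fun i hi => (this i).1 hi, fun i hi => (this i).2 hi⟩

lemma sep_compl {n : ℕ} {y : Fin n → E} {A : Set (Fin n)} (h : A ∈ Sep y) : Aᶜ ∈ Sep y := by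
  obtain ⟨w, h1, h2⟩ := h
  refine ⟨-w, fun i hi => ?_, fun i hi => ?_⟩
  · have := h2 i hi; simp only [inner_neg_left]; linarith
  · have := h1 i (by simpa using hi); simp only [inner_neg_left]; linarith

lemma sum_choose_rec (n e : ℕ) :
    ∑ i ∈ Finset.range (e+1), (n+1).choose i
      = ∑ i ∈ Finset.range (e+1), n.choose i + ∑ i ∈ Finset.range e, n.choose i := by
  induction e with
  | zero => simp
  | succ e ih =>
      have h1 : (n+1).choose (e+1) = n.choose e + n.choose (e+1) := Nat.choose_succ_succ n e
      have h2 : ∑ i ∈ Finset.range (e+1+1), n.choose i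
          = ∑ i ∈ Finset.range (e+1), n.choose i + n.choose (e+1) := Finset.sum_range_succ _ _
      have h3 : ∑ i ∈ Finset.range (e+1+1), (n+1).choose i
          = ∑ i ∈ Finset.range (e+1), (n+1).choose i + (n+1).choose (e+1) := Finset.sum_range_succ _ _
      have h4 : ∑ i ∈ Finset.range (e+1), n.choose i
          = ∑ i ∈ Finset.range e, n.choose i + n.choose e := Finset.sum_range_succ _ _
      omega

lemma sep_empty_of_subsingleton {n : ℕ} [Subsingleton E] (y : Fin (n+1) → E) : Sep y = ∅ := by
  ext A
  simp only [Sep, Set.mem_setOf_eq, Set.mem_empty_iff_false, iff_false]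
  rintro ⟨w, hp1, hp2⟩
  have hy : y 0 = 0 := Subsingleton.elim _ _
  by_cases h : (0 : Fin (n+1)) ∈ A
  · have := hp1 0 h; rw [hy, inner_zero_right] at this; exact lt_irrefl _ this
  · have := hp2 0 h; rw [hy, inner_zero_right] at this; exact lt_irrefl _ this

lemma gp_ne_zero {d n : ℕ} {y : Fin n → E} (h : GP d y) (hd : 1 ≤ d) (i : Fin n) : y i ≠ 0 := by
  intro h0
  have := h {i} (fun _ => 1) (by simpa using hd) (by simp [h0]) i (by simp)
  norm_num at this

lemma hom_count (n : ℕ) : ∀ (E : Type) [NormedAddCommGroup E] [InnerProductSpace ℝ E]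
    [FiniteDimensional ℝ E] (y : Fin (n+1) → E), GP (Module.finrank ℝ E) y →
    (Sep y).ncard = 2 * ∑ i ∈ Finset.range (Module.finrank ℝ E), n.choose i := by
  induction n with
  | zero =>
    intro E _ _ _ y hGP
    rcases Nat.eq_zero_or_pos (Module.finrank ℝ E) with hd | hd
    · have : Subsingleton E := Module.finrank_zero_iff.mp hd
      rw [sep_empty_of_subsingleton]
      simp [hd]
    · have hy0 : y 0 ≠ 0 := gp_ne_zero hGP hd 0
      have hone : ∀ i j : Fin (0+1), i = j := fun i j => Fin.ext (by omega)
      have hself : (0:ℝ) < ⟪y 0, y 0⟫ := by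
        rw [real_inner_self_eq_norm_sq]
        have := norm_pos_iff.mpr hy0
        positivity
      have hsep : Sep y = {(∅ : Set (Fin (0+1))), Set.univ} := by
        ext A
        have hAcases : A = ∅ ∨ A = Set.univ := by
          rcases A.eq_empty_or_nonempty with h | h
          · exact Or.inl h
          · right; obtain ⟨a, ha⟩ := h; ext i; simp only [Set.mem_univ, iff_true]
            rw [hone i a]; exact ha
        constructor
        · intro _; simpa using hAcases
        · intro _
          by_cases h : (0 : Fin (0+1)) ∈ A
          · refine ⟨y 0, fun i hi => ?_, fun i hi => ?_⟩
            · rw [hone i 0]; exact hself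
            · exact absurd (by rwa [hone 0 i] at h) hi
          · refine ⟨-(y 0), fun i hi => ?_, fun i hi => ?_⟩
            · exact absurd (by rwa [hone i 0] at hi) h
            · rw [hone i 0, inner_neg_left]; linarith
      have hne : (∅ : Set (Fin (0+1))) ≠ Set.univ := by
        intro h
        have : (0 : Fin (0+1)) ∈ (∅ : Set (Fin (0+1))) := h ▸ Set.mem_univ 0
        exact this
      rw [hsep, Set.ncard_pair hne]
      have h1 : ∑ i ∈ Finset.range (Module.finrank ℝ E), Nat.choose 0 i = 1 := by
        rw [Finset.sum_eq_single_of_mem 0 (Finset.mem_range.mpr hd)]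
        · simp
        · intro b _ hb
          exact Nat.choose_eq_zero_of_lt (Nat.pos_of_ne_zero hb)
      rw [h1]
  | succ n IH =>
    intro E _ _ _ y hGP
    rcases Nat.eq_zero_or_pos (Module.finrank ℝ E) with hd0 | hdpos
    · have : Subsingleton E := Module.finrank_zero_iff.mp hd0
      rw [sep_empty_of_subsingleton]
      simp [hd0]
    obtain ⟨e, he⟩ : ∃ e, Module.finrank ℝ E = e + 1 := ⟨_, (Nat.succ_pred_eq_of_pos hdpos).symm⟩
    set ℓ : Fin (n+2) := Fin.last (n+1) with hℓ
    have hyℓ : y ℓ ≠ 0 := gp_ne_zero hGP (by omega) ℓ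
    set y' : Fin (n+1) → E := fun i => y i.castSucc with hy'
    set Sp : Set (Set (Fin (n+1))) :=
      {A | ∃ w : E, (∀ i ∈ A, 0 < ⟪w, y' i⟫) ∧ (∀ i ∉ A, ⟪w, y' i⟫ < 0) ∧ 0 < ⟪w, y ℓ⟫} with hSp
    set Sm : Set (Set (Fin (n+1))) :=
      {A | ∃ w : E, (∀ i ∈ A, 0 < ⟪w, y' i⟫) ∧ (∀ i ∉ A, ⟪w, y' i⟫ < 0) ∧ ⟪w, y ℓ⟫ < 0} with hSm
    set S0 : Set (Set (Fin (n+1))) :=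
      {A | ∃ w : E, (∀ i ∈ A, 0 < ⟪w, y' i⟫) ∧ (∀ i ∉ A, ⟪w, y' i⟫ < 0) ∧ ⟪w, y ℓ⟫ = 0} with hS0
    have hselfpos : 0 < ⟪y ℓ, y ℓ⟫ := by
      rw [real_inner_self_eq_norm_sq]
      have := norm_pos_iff.mpr hyℓ
      positivity
    have hperturb : ∀ (A : Set (Fin (n+1))) (w : E), (∀ i ∈ A, 0 < ⟪w, y' i⟫) →
        (∀ i ∉ A, ⟪w, y' i⟫ < 0) → ⟪w, y ℓ⟫ = 0 → A ∈ Sp ∩ Sm := by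
      intro A w hw1 hw2 hw0
      obtain ⟨ε, hε, hend⟩ := perturb y' A w (y ℓ) hw1 hw2
      have habs : |ε/2| < ε := by rw [abs_of_pos (by linarith)]; linarith
      have habs' : |(-(ε/2))| < ε := by rw [abs_neg]; exact habs
      have hip : ∀ δ : ℝ, ⟪w + δ • y ℓ, y ℓ⟫ = δ * ⟪y ℓ, y ℓ⟫ := by
        intro δ; rw [inner_add_left, real_inner_smul_left, hw0, zero_add]
      constructor
      · obtain ⟨g1, g2⟩ := hend (ε/2) habs
        exact ⟨w + (ε/2) • y ℓ, g1, g2, by rw [hip]; positivity⟩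
      · obtain ⟨g1, g2⟩ := hend (-(ε/2)) habs'
        refine ⟨w + (-(ε/2)) • y ℓ, g1, g2, by rw [hip]; nlinarith⟩
    have hA : Sep y' = Sp ∪ Sm := by
      apply Set.Subset.antisymm
      · rintro A ⟨w, hw1, hw2⟩
        rcases lt_trichotomy (⟪w, y ℓ⟫) 0 with h | h | h
        · exact Or.inr ⟨w, hw1, hw2, h⟩
        · exact Or.inl (hperturb A w hw1 hw2 h).1
        · exact Or.inl ⟨w, hw1, hw2, h⟩
      · rintro A (⟨w, hw1, hw2, _⟩ | ⟨w, hw1, hw2, _⟩) <;> exact ⟨w, hw1, hw2⟩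
    have hB : Sp ∩ Sm = S0 := by
      apply Set.Subset.antisymm
      · rintro A ⟨⟨wp, hp1, hp2, hp3⟩, ⟨wm, hm1, hm2, hm3⟩⟩
        refine ⟨(⟪wp, y ℓ⟫) • wm + (-(⟪wm, y ℓ⟫)) • wp, fun i hi => ?_, fun i hi => ?_, ?_⟩
        · rw [inner_add_left, real_inner_smul_left, real_inner_smul_left]
          have := hm1 i hi; have := hp1 i hi
          nlinarith
        · rw [inner_add_left, real_inner_smul_left, real_inner_smul_left]
          have := hm2 i hi; have := hp2 i hi
          nlinarith
        · rw [inner_add_left, real_inner_smul_left, real_inner_smul_left]; ring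
      · rintro A ⟨w, h1, h2, h0⟩
        exact hperturb A w h1 h2 h0
    -- split Sep y according to membership of ℓ
    set T1 : Set (Set (Fin (n+2))) := Sep y ∩ {A | ℓ ∉ A} with hT1
    set T2 : Set (Set (Fin (n+2))) := Sep y ∩ {A | ℓ ∈ A} with hT2
    have hTsplit : Sep y = T1 ∪ T2 := by
      ext A; by_cases h : ℓ ∈ A <;> simp [hT1, hT2, h]
    have hTdisj : Disjoint T1 T2 := by
      rw [Set.disjoint_iff]; rintro A ⟨⟨_, h1⟩, ⟨_, h2⟩⟩; exact absurd h2 h1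
    set r : Set (Fin (n+2)) → Set (Fin (n+1)) := fun A => Fin.castSucc ⁻¹' A with hr
    have hinj1 : Set.InjOn r T1 := by
      rintro A ⟨_, hA'⟩ B ⟨_, hB'⟩ hAB
      simp only [Set.mem_setOf_eq] at hA' hB'
      ext i
      induction i using Fin.lastCases with
      | last => exact iff_of_false hA' hB'
      | cast j => exact Set.ext_iff.mp hAB j
    have hinj2 : Set.InjOn r T2 := by
      rintro A ⟨_, hA'⟩ B ⟨_, hB'⟩ hAB
      simp only [Set.mem_setOf_eq] at hA' hB'
      ext i
      induction i using Fin.lastCases with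
      | last => exact iff_of_true hA' hB'
      | cast j => exact Set.ext_iff.mp hAB j
    have him2 : r '' T2 = Sp := by
      apply Set.Subset.antisymm
      · rintro _ ⟨A, ⟨⟨w, hw1, hw2⟩, hAl⟩, rfl⟩
        simp only [Set.mem_setOf_eq] at hAl
        exact ⟨w, fun i hi => hw1 _ hi, fun i hi => hw2 _ hi, hw1 ℓ hAl⟩
      · rintro A' ⟨w, hw1, hw2, hw3⟩
        refine ⟨Fin.castSucc '' A' ∪ {ℓ}, ⟨⟨w, ?_, ?_⟩, Or.inr rfl⟩, ?_⟩
        · rintro i (⟨j, hj, rfl⟩ | hi)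
          · exact hw1 j hj
          · rw [Set.mem_singleton_iff] at hi; subst hi; exact hw3
        · intro i hi
          induction i using Fin.lastCases with
          | last => exact absurd (Or.inr rfl) hi
          | cast j =>
            have hj : j ∉ A' := fun hj => hi (Or.inl ⟨j, hj, rfl⟩)
            exact hw2 j hj
        · ext j
          simp only [hr, Set.mem_preimage, Set.mem_union, Set.mem_image, Set.mem_singleton_iff]
          constructor
          · rintro (⟨k, hk, hkj⟩ | hj)
            · rwa [← Fin.castSucc_injective _ hkj]
            · exact absurd hj (Fin.castSucc_lt_last j).ne
          · intro hj; exact Or.inl ⟨j, hj, rfl⟩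
    have him1 : r '' T1 = Sm := by
      apply Set.Subset.antisymm
      · rintro _ ⟨A, ⟨⟨w, hw1, hw2⟩, hAl⟩, rfl⟩
        simp only [Set.mem_setOf_eq] at hAl
        exact ⟨w, fun i hi => hw1 _ hi, fun i hi => hw2 _ hi, hw2 ℓ hAl⟩
      · rintro A' ⟨w, hw1, hw2, hw3⟩
        have hlnot : ℓ ∉ Fin.castSucc '' A' := by
          rintro ⟨j, _, hj⟩
          exact absurd hj (Fin.castSucc_lt_last j).ne
        refine ⟨Fin.castSucc '' A', ⟨⟨w, ?_, ?_⟩, hlnot⟩, ?_⟩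
        · rintro i ⟨j, hj, rfl⟩
          exact hw1 j hj
        · intro i hi
          induction i using Fin.lastCases with
          | last => exact hw3
          | cast j =>
            have hj : j ∉ A' := fun hj => hi ⟨j, hj, rfl⟩
            exact hw2 j hj
        · ext j
          simp only [hr, Set.mem_preimage, Set.mem_image]
          constructor
          · rintro ⟨k, hk, hkj⟩
            rwa [← Fin.castSucc_injective _ hkj]
          · intro hj; exact ⟨j, hj, rfl⟩
    have hcount : (Sep y).ncard = Sp.ncard + Sm.ncard := by
      rw [hTsplit, Set.ncard_union_eq hTdisj (Set.toFinite _) (Set.toFinite _)]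
      have e1 : Sm.ncard = T1.ncard := by rw [← him1]; exact Set.ncard_image_of_injOn hinj1
      have e2 : Sp.ncard = T2.ncard := by rw [← him2]; exact Set.ncard_image_of_injOn hinj2
      omega
    -- the restricted family is in general position
    have hGP' : GP (Module.finrank ℝ E) y' := by
      intro t c hcard hsum i hi
      have hsum' : ∑ j ∈ t.map Fin.castSuccEmb, (Fin.lastCases 0 c : Fin (n+2) → ℝ) j • y j = 0 := by
        rw [Finset.sum_map]
        have h5 : ∀ j : Fin (n+1), (Fin.castSuccEmb j : Fin (n+2)) = j.castSucc := fun j => rfl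
        simp only [h5, Fin.lastCases_castSucc]
        exact hsum
      have := hGP (t.map Fin.castSuccEmb) (Fin.lastCases 0 c)
        (by rw [Finset.card_map]; exact hcard) hsum' i.castSucc
        (Finset.mem_map_of_mem _ hi)
      simpa [Fin.lastCases_castSucc] using this
    have hIH1 : (Sep y').ncard = 2 * ∑ i ∈ Finset.range (Module.finrank ℝ E), n.choose i :=
      IH E y' hGP'
    -- the orthogonal complement of y ℓ
    set K : Submodule ℝ E := (Submodule.span ℝ {y ℓ})ᗮ with hK
    have hKrank : Module.finrank ℝ K = e := by
      rw [hK]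
      have h6 := Submodule.finrank_add_finrank_orthogonal (Submodule.span ℝ {y ℓ})
      rw [finrank_span_singleton hyℓ] at h6
      omega
    set z : Fin (n+1) → K := fun i => K.orthogonalProjectionOnto (y' i) with hz
    have hinner : ∀ (w : K) (i : Fin (n+1)), ⟪w, z i⟫ = ⟪(w : E), y' i⟫ := by
      intro w i
      rw [Submodule.coe_inner]
      have hmem : y' i - (z i : E) ∈ Kᗮ := K.sub_starProjection_mem_orthogonal (y' i)
      have h7 := Submodule.inner_right_of_mem_orthogonal w.2 hmem
      rw [inner_sub_right] at h7
      linarith [h7]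
    have hS0z : S0 = Sep z := by
      ext A
      constructor
      · rintro ⟨w, h1, h2, h0⟩
        have hwK : w ∈ K := Submodule.mem_orthogonal_singleton_iff_inner_right.mpr
          (by rw [real_inner_comm]; exact h0)
        refine ⟨⟨w, hwK⟩, fun i hi => ?_, fun i hi => ?_⟩
        · rw [hinner]; exact h1 i hi
        · rw [hinner]; exact h2 i hi
      · rintro ⟨w, h1, h2⟩
        refine ⟨(w : E), fun i hi => ?_, fun i hi => ?_, ?_⟩
        · have h20 := h1 i hi; rwa [hinner] at h20
        · have h20 := h2 i hi; rwa [hinner] at h20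
        · have h8 := Submodule.mem_orthogonal_singleton_iff_inner_right.mp w.2
          rw [real_inner_comm]; exact h8
    have hGPz : GP (Module.finrank ℝ K) z := by
      rw [hKrank]
      intro t c hcard hsum i hi
      have hmem : ∀ j : Fin (n+1), ∃ a : ℝ, y' j - (z j : E) = a • y ℓ := by
        intro j
        have h9 : y' j - (z j : E) ∈ Kᗮ := K.sub_starProjection_mem_orthogonal (y' j)
        have h9' : y' j - (z j : E) ∈ Submodule.span ℝ {y ℓ} := by
          rw [← Submodule.orthogonal_orthogonal (Submodule.span ℝ {y ℓ})]
          exact h9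
        obtain ⟨a, ha⟩ := Submodule.mem_span_singleton.mp h9'
        exact ⟨a, ha.symm⟩
      choose a ha using hmem
      have hsumE : ∑ j ∈ t, c j • (z j : E) = 0 := by
        have h10 := congrArg (Submodule.subtype K) hsum
        simpa using h10
      have hkey : ∑ j ∈ t, c j • y j.castSucc = (∑ j ∈ t, c j * a j) • y (Fin.last (n+1)) := by
        have h11 : ∀ j ∈ t, c j • y j.castSucc = c j • (z j : E) + (c j * a j) • y (Fin.last (n+1)) := by
          intro j _
          have h12 : y j.castSucc = a j • y (Fin.last (n+1)) + (z j : E) := by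
            have h12' := ha j
            rw [sub_eq_iff_eq_add] at h12'
            exact h12'
          rw [h12, smul_add, smul_smul, add_comm]
        rw [Finset.sum_congr rfl h11, Finset.sum_add_distrib, hsumE, zero_add, ← Finset.sum_smul]
      have hℓnot : ℓ ∉ t.map Fin.castSuccEmb := by
        simp only [Finset.mem_map]
        rintro ⟨j, _, hj⟩
        exact absurd hj (Fin.castSucc_lt_last j).ne
      have hsum'' : ∑ j ∈ insert ℓ (t.map Fin.castSuccEmb),
          (Fin.lastCases (-(∑ j ∈ t, c j * a j)) c : Fin (n+2) → ℝ) j • y j = 0 := by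
        rw [Finset.sum_insert hℓnot, Finset.sum_map]
        have h5 : ∀ j : Fin (n+1), (Fin.castSuccEmb j : Fin (n+2)) = j.castSucc := fun j => rfl
        have h13 : ∀ (m : ℝ) (cc : Fin (n+1) → ℝ),
            (Fin.lastCases m cc : Fin (n+2) → ℝ) (Fin.last (n+1)) = m := fun m cc => Fin.lastCases_last
        simp only [h5, Fin.lastCases_castSucc, hℓ, h13]
        rw [hkey, neg_smul]
        abel
      have hcard'' : (insert ℓ (t.map Fin.castSuccEmb)).card ≤ Module.finrank ℝ E := by
        rw [Finset.card_insert_of_notMem hℓnot, Finset.card_map]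
        omega
      have h14 := hGP _ _ hcard'' hsum'' i.castSucc
        (Finset.mem_insert_of_mem (Finset.mem_map_of_mem _ hi))
      simpa [Fin.lastCases_castSucc] using h14
    have hIH2 : (Sep z).ncard = 2 * ∑ i ∈ Finset.range e, n.choose i := by
      have h15 := IH K z hGPz
      rwa [hKrank] at h15
    have hD := Set.ncard_union_add_ncard_inter Sp Sm (Set.toFinite _) (Set.toFinite _)
    rw [← hA] at hD
    rw [hB, hS0z] at hD
    rw [hcount, he, sum_choose_rec n e]
    rw [he] at hIH1
    omega

end CoverAux

open CoverAux in
theorem count_affine_separations (d n : ℕ) (hn : d + 1 ≤ n)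
    (x : Fin n → EuclideanSpace ℝ (Fin d))
    (hgen : ∀ s : Finset (Fin n), s.card = d + 1 →
      AffineIndependent ℝ (fun i : s => x i)) :
    {p : Set (Set (Fin n)) | ∃ A : Set (Fin n), p = {A, Aᶜ} ∧
      ∃ (w : EuclideanSpace ℝ (Fin d)) (c : ℝ),
        (∀ i ∈ A, c < ⟪w, x i⟫) ∧ (∀ i ∈ Aᶜ, ⟪w, x i⟫ < c)}.ncard
      = ∑ i ∈ Finset.range (d + 1), (n - 1).choose i := by
  classical
  obtain ⟨m, rfl⟩ : ∃ m, n = m + 1 := ⟨n - 1, by omega⟩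
  set y : Fin (m+1) → EuclideanSpace ℝ (Fin (d+1)) :=
    fun i => (WithLp.toLp 2 (Fin.snoc (x i).ofLp 1 : Fin (d+1) → ℝ) : EuclideanSpace ℝ (Fin (d+1))) with hy
  have hkey : ∀ (W : EuclideanSpace ℝ (Fin (d+1))) (i : Fin (m+1)),
      ⟪W, y i⟫ = ⟪(WithLp.toLp 2 (fun j => W j.castSucc) : EuclideanSpace ℝ (Fin d)), x i⟫
        + W (Fin.last d) := by
    intro W i
    rw [hy]
    rw [PiLp.inner_apply, PiLp.inner_apply, Fin.sum_univ_castSucc]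
    simp [RCLike.inner_apply, Fin.snoc_castSucc, Fin.snoc_last]
  have hOSep : {A : Set (Fin (m+1)) | ∃ (w : EuclideanSpace ℝ (Fin d)) (c : ℝ),
        (∀ i ∈ A, c < ⟪w, x i⟫) ∧ (∀ i ∈ Aᶜ, ⟪w, x i⟫ < c)} = Sep y := by
    ext A
    constructor
    · rintro ⟨w, c, h1, h2⟩
      have hres : (WithLp.toLp 2
          (fun j => (WithLp.toLp 2 (Fin.snoc w.ofLp (-c)) : EuclideanSpace ℝ (Fin (d+1))) j.castSucc) : EuclideanSpace ℝ (Fin d)) = w := by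
        ext j
        exact Fin.snoc_castSucc (α := fun _ => ℝ) (-c) w.ofLp j
      have hlast : (WithLp.toLp 2 (Fin.snoc w.ofLp (-c)) : EuclideanSpace ℝ (Fin (d+1))) (Fin.last d) = -c :=
        Fin.snoc_last (α := fun _ => ℝ) (-c) w.ofLp
      refine ⟨(WithLp.toLp 2 (Fin.snoc w.ofLp (-c)) : EuclideanSpace ℝ (Fin (d+1))), fun i hi => ?_, fun i hi => ?_⟩
      · rw [hkey, hres, hlast]
        have := h1 i hi; linarith
      · rw [hkey, hres, hlast]
        have := h2 i hi; linarith
    · rintro ⟨W, h1, h2⟩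
      refine ⟨(WithLp.toLp 2 (fun j => W j.castSucc) : EuclideanSpace ℝ (Fin d)), -(W (Fin.last d)),
        fun i hi => ?_, fun i hi => ?_⟩
      · have := h1 i hi; rw [hkey] at this; linarith
      · have := h2 i hi; rw [hkey] at this; linarith
  have hGPy : GP (Module.finrank ℝ (EuclideanSpace ℝ (Fin (d+1)))) y := by
    rw [finrank_euclideanSpace_fin]
    intro t c hcard hsum i hi
    have hcomp : ∀ j : Fin (d+1), ∑ i ∈ t, c i * (y i j) = 0 := by
      intro j
      have h0 := congrArg (fun v : EuclideanSpace ℝ (Fin (d+1)) =>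
        ⟪EuclideanSpace.single j (1:ℝ), v⟫) hsum
      simpa [inner_sum, inner_smul_right, EuclideanSpace.inner_single_left] using h0
    have hclast : ∑ i ∈ t, c i = 0 := by
      have h0 := hcomp (Fin.last d)
      have h1 : ∀ i : Fin (m+1), y i (Fin.last d) = 1 := fun i => Fin.snoc_last (α := fun _ => ℝ) (1:ℝ) (x i).ofLp
      simp only [h1, mul_one] at h0
      exact h0
    have hcx : ∑ i ∈ t, c i • x i = 0 := by
      have hcompx : ∀ j : Fin d, ∑ i ∈ t, c i * (x i j) = 0 := by
        intro j
        have h0 := hcomp j.castSucc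
        have h1 : ∀ i : Fin (m+1), y i j.castSucc = x i j := fun i =>
          Fin.snoc_castSucc (α := fun _ => ℝ) (1:ℝ) (x i).ofLp j
        simp only [h1] at h0
        exact h0
      ext j
      have h2 : (∑ i ∈ t, c i • x i) j = ∑ i ∈ t, c i * (x i j) := by
        rw [WithLp.ofLp_sum, Finset.sum_apply]
        rfl
      rw [h2, hcompx j]
      rfl
    obtain ⟨t', ht't, hcard'⟩ := Finset.exists_superset_card_eq hcard (by simpa using hn)
    have haff := hgen t' hcard'
    rw [affineIndependent_iff] at haff
    have hw := haff Finset.univ (fun i => if (i : Fin (m+1)) ∈ t then c i else 0) ?_ ?_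
    · have h9 := hw ⟨i, ht't hi⟩ (Finset.mem_univ _)
      simpa [hi] using h9
    · rw [Finset.sum_coe_sort t' (fun j => if j ∈ t then c j else 0),
        Finset.sum_ite_mem, Finset.inter_eq_right.mpr ht't]
      exact hclast
    · have h3 : ∑ e : ↥t', (if (e : Fin (m+1)) ∈ t then c e else 0) • x e
          = ∑ j ∈ t, c j • x j := by
        rw [Finset.sum_coe_sort t' (fun j => (if j ∈ t then c j else 0) • x j)]
        simp only [ite_smul, zero_smul]
        rw [Finset.sum_ite_mem, Finset.inter_eq_right.mpr ht't]
      rw [h3]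
      exact hcx
  have hhom := hom_count m (EuclideanSpace ℝ (Fin (d+1))) y hGPy
  rw [finrank_euclideanSpace_fin] at hhom
  rw [← hOSep] at hhom
  -- unordered pair counting
  set O : Set (Set (Fin (m+1))) := {A : Set (Fin (m+1)) |
    ∃ (w : EuclideanSpace ℝ (Fin d)) (c : ℝ),
        (∀ i ∈ A, c < ⟪w, x i⟫) ∧ (∀ i ∈ Aᶜ, ⟪w, x i⟫ < c)} with hO
  have hcompl : ∀ A ∈ O, Aᶜ ∈ O := by
    intro A hA
    have : A ∈ Sep y := by rw [← hOSep]; exact hA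
    have h4 := sep_compl this
    rw [← hOSep] at h4
    exact h4
  have hAne : ∀ A : Set (Fin (m+1)), A ≠ Aᶜ := by
    intro A h
    by_cases h0 : (0 : Fin (m+1)) ∈ A
    · have h5 : (0 : Fin (m+1)) ∈ Aᶜ := h ▸ h0
      exact h5 h0
    · have h5 : (0 : Fin (m+1)) ∈ Aᶜ := h0
      rw [← h] at h5
      exact h0 h5
  set f : Set (Fin (m+1)) → Set (Set (Fin (m+1))) := fun A => {A, Aᶜ} with hf
  have hOfin : O.Finite := Set.toFinite O
  set F := hOfin.toFinset with hF
  have hFmem : ∀ A, A ∈ F ↔ A ∈ O := fun A => Set.Finite.mem_toFinset hOfin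
  set G := F.image f with hG
  have hcards : F.card = ∑ p ∈ G, (F.filter (fun A => f A = p)).card :=
    Finset.card_eq_sum_card_fiberwise (fun A hA => Finset.mem_image_of_mem f hA)
  have hfiber : ∀ p ∈ G, (F.filter (fun A => f A = p)).card = 2 := by
    intro p hp
    obtain ⟨A, hA, rfl⟩ := Finset.mem_image.mp hp
    have hfil : F.filter (fun B => f B = f A) = {A, Aᶜ} := by
      ext B
      simp only [Finset.mem_filter, Finset.mem_insert, Finset.mem_singleton]
      constructor
      · rintro ⟨hB, hfB⟩
        rcases Set.pair_eq_pair_iff.mp hfB with ⟨h1, _⟩ | ⟨h1, _⟩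
        · exact Or.inl h1
        · exact Or.inr h1
      · rintro (rfl | rfl)
        · exact ⟨hA, rfl⟩
        · refine ⟨?_, ?_⟩
          · rw [hFmem]
            exact hcompl A ((hFmem A).mp hA)
          · show ({Aᶜ, Aᶜᶜ} : Set (Set (Fin (m+1)))) = {A, Aᶜ}
            rw [compl_compl]
            exact Set.pair_comm Aᶜ A
    rw [hfil, Finset.card_insert_of_notMem (by
      rw [Finset.mem_singleton]
      exact hAne A), Finset.card_singleton]
  have hFG : F.card = 2 * G.card := by
    rw [hcards, Finset.sum_congr rfl hfiber, Finset.sum_const, smul_eq_mul, mul_comm]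
  have hgoal : {p : Set (Set (Fin (m+1))) | ∃ A : Set (Fin (m+1)), p = {A, Aᶜ} ∧
      ∃ (w : EuclideanSpace ℝ (Fin d)) (c : ℝ),
        (∀ i ∈ A, c < ⟪w, x i⟫) ∧ (∀ i ∈ Aᶜ, ⟪w, x i⟫ < c)} = ↑G := by
    rw [hG, Finset.coe_image, Set.Finite.coe_toFinset]
    ext p
    constructor
    · rintro ⟨A, h1, h2⟩
      exact ⟨A, h2, h1.symm⟩
    · rintro ⟨A, h2, h1⟩
      exact ⟨A, h1.symm, h2⟩
  rw [hgoal, Set.ncard_coe_finset]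
  have hOF : O.ncard = F.card := Set.ncard_eq_toFinset_card O hOfin
  rw [hOF, hFG] at hhom
  have : G.card = ∑ i ∈ Finset.range (d+1), m.choose i := by omega
  rw [this]
  simp [Nat.add_sub_cancel]
end

section
/- For n points in general position in ℝ^d (n ≥ d+2), the number of Radon partitions (unordered partitions {A, Aᶜ} whose convex hulls intersect) equals ∑_{i=d+1}^{n-1} C(n-1, i). -/
open Module Finset

variable {V : Type} [AddCommGroup V] [Module ℝ V]

/-- feasible sign patterns -/
def RFeas {n : ℕ} (ℓ : Fin n → V →ₗ[ℝ] ℝ) : Set (Set (Fin n)) :=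
  {A | ∃ v : V, v ≠ 0 ∧ ∀ i, (i ∈ A → 0 ≤ ℓ i v) ∧ (i ∉ A → ℓ i v ≤ 0)}

/-- genericity: any nonzero dependency has big support -/
def RGen {n : ℕ} (ℓ : Fin n → V →ₗ[ℝ] ℝ) : Prop :=
  ∀ c : Fin n → ℝ, (∑ i, c i • ℓ i) = 0 → c ≠ 0 → finrank ℝ V < {i | c i ≠ 0}.ncard

lemma rgen_indep {n : ℕ} {ℓ : Fin n → V →ₗ[ℝ] ℝ} (hgen : RGen ℓ)
    {s : Finset (Fin n)} (hcard : s.card ≤ finrank ℝ V) :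
    LinearIndependent ℝ (fun i : s => ℓ i) := by
  rw [Fintype.linearIndependent_iff]
  intro g hg
  by_contra hgi
  push_neg at hgi
  obtain ⟨i0, hi0⟩ := hgi
  classical
  set c : Fin n → ℝ := fun j => if h : j ∈ s then g ⟨j, h⟩ else 0 with hc
  have hcs : ∀ j, c j ≠ 0 → j ∈ s := by
    intro j hj; by_contra h; simp [hc, h] at hj
  have hsum : ∑ j, c j • ℓ j = 0 := by
    rw [← hg]
    rw [← Finset.sum_subset (Finset.subset_univ s) (by intro j _ hj; simp [hc, hj])]
    rw [← Finset.sum_attach s (fun j => c j • ℓ j)]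
    exact Finset.sum_congr rfl (by intro j _; simp [hc, j.2])
  have hc0 : c ≠ 0 := by
    intro h
    apply hi0
    have := congrFun h i0
    simpa [hc, i0.2] using this
  have hlt := hgen c hsum hc0
  have hle : {j | c j ≠ 0}.ncard ≤ s.card := by
    rw [← Set.ncard_coe_finset]
    exact Set.ncard_le_ncard hcs (s.finite_toSet)
  omega

lemma rgen_common_ker [FiniteDimensional ℝ V] {n : ℕ} {ℓ : Fin n → V →ₗ[ℝ] ℝ}
    (hn : finrank ℝ V ≤ n) (hgen : RGen ℓ) {v : V} (hv : ∀ i, ℓ i v = 0) : v = 0 := by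
  obtain ⟨s, -, hs_card⟩ := Finset.exists_subset_card_eq
    (show finrank ℝ V ≤ (univ : Finset (Fin n)).card by simpa)
  have hind := rgen_indep hgen (le_of_eq hs_card)
  have htop : Submodule.span ℝ (Set.range ℓ) = ⊤ := by
    apply Submodule.eq_top_of_finrank_eq
    rw [Subspace.dual_finrank_eq]
    refine le_antisymm (le_trans (Submodule.finrank_le _) (by rw [Subspace.dual_finrank_eq])) ?_
    have h1 : Submodule.span ℝ (Set.range (fun i : s => ℓ i)) ≤ Submodule.span ℝ (Set.range ℓ) := by
      apply Submodule.span_mono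
      rintro - ⟨i, rfl⟩; exact ⟨i, rfl⟩
    have h2 := finrank_span_eq_card hind
    rw [Fintype.card_coe, hs_card] at h2
    calc finrank ℝ V = finrank ℝ (Submodule.span ℝ (Set.range (fun i : s => ℓ i))) := h2.symm
      _ ≤ _ := Submodule.finrank_mono h1
  rw [← Module.forall_dual_apply_eq_zero_iff ℝ v]
  intro φ
  have hφ : φ ∈ Submodule.span ℝ (Set.range ℓ) := htop ▸ Submodule.mem_top
  induction hφ using Submodule.span_induction with
  | mem y hy => obtain ⟨i, rfl⟩ := hy; exact hv i
  | zero => rfl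
  | add f g _ _ hf hg => simp [hf, hg]
  | smul a f _ hf => simp [hf]

lemma ncard_univ_set (n : ℕ) : (Set.univ : Set (Set (Fin n))).ncard = 2 ^ n := by
  rw [Set.ncard_univ]
  have : Nat.card (Set (Fin n)) = Nat.card (Fin n → Prop) := rfl
  rw [this, Nat.card_fun]
  simp


-- genericity passes to the first n of n+1 functionals
lemma rgen_init {n : ℕ} {ℓ : Fin (n + 1) → V →ₗ[ℝ] ℝ} (hgen : RGen ℓ) :
    RGen (fun i : Fin n => ℓ i.castSucc) := by
  intro c hc hc0
  classical
  set c' : Fin (n + 1) → ℝ := Fin.snoc c 0 with hc'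
  have hsum : ∑ j, c' j • ℓ j = 0 := by
    rw [Fin.sum_univ_castSucc]
    simpa [hc', Fin.snoc_castSucc, Fin.snoc_last] using hc
  have hc'0 : c' ≠ 0 := by
    intro h
    apply hc0
    funext i
    have := congrFun h i.castSucc
    simpa [hc', Fin.snoc_castSucc] using this
  have hlt := hgen c' hsum hc'0
  have himg : {j | c' j ≠ 0} = Fin.castSucc '' {i | c i ≠ 0} := by
    ext j
    refine Fin.lastCases ?_ ?_ j
    · simp [hc', Fin.snoc_last]
    · intro j
      simp only [hc', Fin.snoc_castSucc, Set.mem_setOf_eq, Set.mem_image]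
      constructor
      · intro h; exact ⟨j, h, rfl⟩
      · rintro ⟨i, hi, hij⟩
        rwa [← Fin.castSucc_inj.mp hij]
  rw [himg, Set.ncard_image_of_injective _ (Fin.castSucc_injective n)] at hlt
  exact hlt


lemma rgen_ne_zero {n : ℕ} {ℓ : Fin n → V →ₗ[ℝ] ℝ} (hgen : RGen ℓ)
    (hk : 1 ≤ finrank ℝ V) (i : Fin n) : ℓ i ≠ 0 := by
  intro h
  classical
  set c : Fin n → ℝ := Pi.single i (1:ℝ) with hcdef
  have hsum : ∑ j, c j • ℓ j = 0 := by
    rw [Finset.sum_eq_single i]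
    · simp [hcdef, h]
    · intro b _ hb; simp [hcdef, Pi.single_eq_of_ne hb]
    · simp
  have hlt := hgen _ hsum (by
    intro hc
    have := congrFun hc i
    simp [hcdef] at this)
  have : {j | c j ≠ 0} = {i} := by
    ext j
    by_cases hj : j = i <;> simp [hcdef, hj, Pi.single_eq_of_ne, hj]
  rw [this] at hlt
  simp at hlt
  omega

lemma finrank_ker_add_one [FiniteDimensional ℝ V] {f : V →ₗ[ℝ] ℝ} (hf : f ≠ 0) :
    finrank ℝ ↥(LinearMap.ker f) + 1 = finrank ℝ V := by
  have hsurj : LinearMap.range f = ⊤ := by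
    rcases (em (∀ v, f v = 0)) with h | h
    · exact absurd (LinearMap.ext h) hf
    push_neg at h
    obtain ⟨v, hv⟩ := h
    rw [Submodule.eq_top_iff']
    intro r
    exact ⟨(r / f v) • v, by rw [map_smul, smul_eq_mul]; field_simp⟩
  have := f.finrank_range_add_finrank_ker
  rw [hsurj, finrank_top] at this
  simp only [finrank_self] at this
  omega

lemma rgen_restrict [FiniteDimensional ℝ V] {n : ℕ} {ℓ : Fin (n + 1) → V →ₗ[ℝ] ℝ}
    (hgen : RGen ℓ) (hk : 1 ≤ finrank ℝ V) :
    RGen (fun i : Fin n =>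
      (ℓ i.castSucc).comp (LinearMap.ker (ℓ (Fin.last n))).subtype) := by
  intro c hc hc0
  classical
  have hne := rgen_ne_zero hgen hk (Fin.last n)
  have hex : ∃ v0 : V, ℓ (Fin.last n) v0 = 1 := by
    rcases (em (∀ v, ℓ (Fin.last n) v = 0)) with h | h
    · exact absurd (LinearMap.ext h) hne
    push_neg at h
    obtain ⟨v, hv⟩ := h
    exact ⟨(ℓ (Fin.last n) v)⁻¹ • v, by rw [map_smul, smul_eq_mul]; field_simp⟩
  obtain ⟨v0, hv0⟩ := hex
  set g : V →ₗ[ℝ] ℝ := ∑ i, c i • ℓ i.castSucc with hg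
  have hgker : ∀ v, ℓ (Fin.last n) v = 0 → g v = 0 := by
    intro v hv
    have := congrFun (congrArg DFunLike.coe hc) ⟨v, hv⟩
    simp only [LinearMap.zero_apply] at this
    rw [← this]
    simp [hg, LinearMap.sum_apply]
  -- factor g through ℓ last
  have hfac : g = (g v0) • ℓ (Fin.last n) := by
    ext v
    have h1 : ℓ (Fin.last n) (v - (ℓ (Fin.last n) v) • v0) = 0 := by simp [hv0]
    have := hgker _ h1
    simp only [map_sub, map_smul, sub_eq_zero, smul_eq_mul] at this
    simp only [LinearMap.smul_apply, smul_eq_mul]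
    rw [this]; ring
  set c' : Fin (n + 1) → ℝ := Fin.snoc c (-(g v0)) with hc'
  have hsum : ∑ j, c' j • ℓ j = 0 := by
    rw [Fin.sum_univ_castSucc]
    simp only [hc', Fin.snoc_castSucc, Fin.snoc_last]
    have e1 : ∑ i : Fin n, c i • ℓ i.castSucc = (g v0) • ℓ (Fin.last n) := by
      rw [← hg]; exact hfac
    rw [e1]
    module
  have hc'0 : c' ≠ 0 := by
    intro h
    apply hc0
    funext i
    have := congrFun h i.castSucc
    simpa [hc', Fin.snoc_castSucc] using this
  have hlt := hgen c' hsum hc'0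
  have hsub : {j | c' j ≠ 0} ⊆ Fin.castSucc '' {i | c i ≠ 0} ∪ {Fin.last n} := by
    intro j hj
    rcases Fin.eq_castSucc_or_eq_last j with ⟨i, rfl⟩ | rfl
    · left
      exact ⟨i, by simpa [hc', Fin.snoc_castSucc] using hj, rfl⟩
    · right; rfl
  have hcard : {j | c' j ≠ 0}.ncard ≤ {i | c i ≠ 0}.ncard + 1 := by
    calc {j | c' j ≠ 0}.ncard ≤ (Fin.castSucc '' {i | c i ≠ 0} ∪ {Fin.last n}).ncard :=
          Set.ncard_le_ncard hsub (Set.Finite.union (Set.toFinite _) (Set.toFinite _))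
      _ ≤ (Fin.castSucc '' {i | c i ≠ 0}).ncard + ({Fin.last n} : Set (Fin (n+1))).ncard :=
          Set.ncard_union_le _ _
      _ = {i | c i ≠ 0}.ncard + 1 := by
          rw [Set.ncard_image_of_injective _ (Fin.castSucc_injective n), Set.ncard_singleton]
  have hH := finrank_ker_add_one hne
  omega

-- base case k = n ≥ 1 : all patterns feasible
lemma rfeas_univ [FiniteDimensional ℝ V] {n : ℕ} (hkn : finrank ℝ V = n) (hn : 1 ≤ n)
    (ℓ : Fin n → V →ₗ[ℝ] ℝ)
    (hker : ∀ v : V, (∀ i, ℓ i v = 0) → v = 0) :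
    RFeas ℓ = Set.univ := by
  have hΦ : Function.Surjective (LinearMap.pi ℓ : V →ₗ[ℝ] (Fin n → ℝ)) := by
    rw [← LinearMap.range_eq_top]
    apply Submodule.eq_top_of_finrank_eq
    have hrn := (LinearMap.pi ℓ : V →ₗ[ℝ] (Fin n → ℝ)).finrank_range_add_finrank_ker
    have hk : LinearMap.ker (LinearMap.pi ℓ : V →ₗ[ℝ] (Fin n → ℝ)) = ⊥ := by
      rw [LinearMap.ker_eq_bot']
      intro v hv
      exact hker v (fun i => congrFun hv i)
    rw [hk, finrank_bot, hkn] at hrn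
    have : finrank ℝ (Fin n → ℝ) = n := by simp
    omega
  ext A
  simp only [Set.mem_univ, iff_true, RFeas, Set.mem_setOf_eq]
  classical
  obtain ⟨v, hv⟩ := hΦ (fun i => if i ∈ A then 1 else -1)
  refine ⟨v, ?_, ?_⟩
  · intro h
    have := congrFun hv ⟨0, hn⟩
    rw [h] at this
    simp at this
    split at this <;> norm_num at this
  · intro i
    have := congrFun hv i
    simp only [LinearMap.pi_apply] at this
    constructor <;> intro hi <;> simp [this, hi]

set_option linter.unusedSectionVars false
section Step
variable {V : Type} [AddCommGroup V] [Module ℝ V] [FiniteDimensional ℝ V]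
variable {n : ℕ} (ℓ : Fin (n + 1) → V →ₗ[ℝ] ℝ)

def Spl : Set (Set (Fin n)) :=
  {A | ∃ v : V, v ≠ 0 ∧ (∀ i : Fin n, (i ∈ A → 0 ≤ ℓ i.castSucc v) ∧ (i ∉ A → ℓ i.castSucc v ≤ 0))
      ∧ 0 ≤ ℓ (Fin.last n) v}

def Smi : Set (Set (Fin n)) :=
  {A | ∃ v : V, v ≠ 0 ∧ (∀ i : Fin n, (i ∈ A → 0 ≤ ℓ i.castSucc v) ∧ (i ∉ A → ℓ i.castSucc v ≤ 0))
      ∧ ℓ (Fin.last n) v ≤ 0}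

def ipl (A : Set (Fin n)) : Set (Fin (n + 1)) := Fin.castSucc '' A ∪ {Fin.last n}
def imi (A : Set (Fin n)) : Set (Fin (n + 1)) := Fin.castSucc '' A

lemma mem_ipl_castSucc (A : Set (Fin n)) (i : Fin n) : i.castSucc ∈ ipl A ↔ i ∈ A := by
  simp only [ipl, Set.mem_union, Set.mem_image, Set.mem_singleton_iff]
  constructor
  · rintro (⟨j, hj, hji⟩ | h)
    · rwa [← (Fin.castSucc_injective n) hji]
    · exact absurd h (Fin.castSucc_lt_last i).ne
  · intro h; exact Or.inl ⟨i, h, rfl⟩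

lemma mem_imi_castSucc (A : Set (Fin n)) (i : Fin n) : i.castSucc ∈ imi A ↔ i ∈ A := by
  simp only [imi, Set.mem_image]
  constructor
  · rintro ⟨j, hj, hji⟩; rwa [← (Fin.castSucc_injective n) hji]
  · intro h; exact ⟨i, h, rfl⟩

lemma last_mem_ipl (A : Set (Fin n)) : Fin.last n ∈ ipl A := Or.inr rfl

lemma last_not_mem_imi (A : Set (Fin n)) : Fin.last n ∉ imi A := by
  rintro ⟨j, _, hj⟩
  exact (Fin.castSucc_lt_last j).ne hj

lemma ipl_inj : Function.Injective (ipl (n := n)) := by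
  intro A B h
  ext i
  rw [← mem_ipl_castSucc A i, ← mem_ipl_castSucc B i, h]

lemma imi_inj : Function.Injective (imi (n := n)) := by
  intro A B h
  ext i
  rw [← mem_imi_castSucc A i, ← mem_imi_castSucc B i, h]

lemma rfeas_split : RFeas ℓ = ipl '' Spl ℓ ∪ imi '' Smi ℓ := by
  ext A
  constructor
  · rintro ⟨v, hv0, hs⟩
    by_cases hlast : Fin.last n ∈ A
    · left
      refine ⟨Fin.castSucc ⁻¹' A, ⟨v, hv0, fun i => hs i.castSucc, (hs _).1 hlast⟩, ?_⟩
      ext j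
      rcases Fin.eq_castSucc_or_eq_last j with ⟨i, rfl⟩ | rfl
      · rw [mem_ipl_castSucc]; rfl
      · simpa [last_mem_ipl] using hlast
    · right
      refine ⟨Fin.castSucc ⁻¹' A, ⟨v, hv0, fun i => hs i.castSucc, (hs _).2 hlast⟩, ?_⟩
      ext j
      rcases Fin.eq_castSucc_or_eq_last j with ⟨i, rfl⟩ | rfl
      · rw [mem_imi_castSucc]; rfl
      · simpa [last_not_mem_imi] using hlast
  · rintro (⟨A', ⟨v, hv0, hs, hl⟩, rfl⟩ | ⟨A', ⟨v, hv0, hs, hl⟩, rfl⟩) <;>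
      refine ⟨v, hv0, fun j => ?_⟩
    · rcases Fin.eq_castSucc_or_eq_last j with ⟨i, rfl⟩ | rfl
      · rw [mem_ipl_castSucc]; exact hs i
      · exact ⟨fun _ => hl, fun h => absurd (last_mem_ipl A') h⟩
    · rcases Fin.eq_castSucc_or_eq_last j with ⟨i, rfl⟩ | rfl
      · rw [mem_imi_castSucc]; exact hs i
      · exact ⟨fun h => absurd h (last_not_mem_imi A'), fun _ => hl⟩

lemma rfeas_split_disjoint : Disjoint (ipl '' Spl ℓ) (imi '' Smi ℓ) := by
  rw [Set.disjoint_left]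
  rintro A ⟨A', -, rfl⟩ ⟨B', -, hB⟩
  exact last_not_mem_imi B' (hB ▸ last_mem_ipl A')

lemma spl_union_smi : Spl ℓ ∪ Smi ℓ = RFeas (fun i : Fin n => ℓ i.castSucc) := by
  ext A
  constructor
  · rintro (⟨v, hv0, hs, -⟩ | ⟨v, hv0, hs, -⟩) <;> exact ⟨v, hv0, hs⟩
  · rintro ⟨v, hv0, hs⟩
    rcases le_total 0 (ℓ (Fin.last n) v) with h | h
    · exact Or.inl ⟨v, hv0, hs, h⟩
    · exact Or.inr ⟨v, hv0, hs, h⟩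
lemma spl_inter_smi (hker : ∀ v : V, (∀ i : Fin n, ℓ i.castSucc v = 0) → v = 0) :
    Spl ℓ ∩ Smi ℓ
      = RFeas (fun i : Fin n => (ℓ i.castSucc).comp (LinearMap.ker (ℓ (Fin.last n))).subtype) := by
  ext A
  constructor
  · rintro ⟨⟨vp, hp0, hps, hpl⟩, ⟨vm, hm0, hms, hml⟩⟩
    rcases eq_or_lt_of_le hpl with hpe | hpl
    · exact ⟨⟨vp, by simpa [LinearMap.mem_ker] using hpe.symm⟩,
        by simpa [Submodule.coe_eq_zero] using hp0, fun i => hps i⟩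
    rcases eq_or_lt_of_le hml with hme | hml
    · exact ⟨⟨vm, by simpa [LinearMap.mem_ker] using hme⟩,
        by simpa [Submodule.coe_eq_zero] using hm0, fun i => hms i⟩
    set t : ℝ := ℓ (Fin.last n) vp with ht
    set s : ℝ := -(ℓ (Fin.last n) vm) with hs
    have hspos : 0 < s := by simp [hs]; exact hml
    set w : V := s • vp + t • vm with hw
    have hwker : ℓ (Fin.last n) w = 0 := by
      simp only [hw, map_add, map_smul, smul_eq_mul, ← ht]
      rw [hs]; ring
    have hwsigns : ∀ i : Fin n, (i ∈ A → 0 ≤ ℓ i.castSucc w) ∧ (i ∉ A → ℓ i.castSucc w ≤ 0) := by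
      intro i
      constructor <;> intro hi
      · have h1 := (hps i).1 hi
        have h2 := (hms i).1 hi
        simp only [hw, map_add, map_smul, smul_eq_mul]
        positivity
      · have h1 := (hps i).2 hi
        have h2 := (hms i).2 hi
        simp only [hw, map_add, map_smul, smul_eq_mul]
        have := mul_nonneg hspos.le (neg_nonneg.mpr h1)
        have := mul_nonneg hpl.le (neg_nonneg.mpr h2)
        nlinarith
    have hw0 : w ≠ 0 := by
      intro h0
      apply hp0
      apply hker
      intro i
      have happ : s * ℓ i.castSucc vp + t * ℓ i.castSucc vm = 0 := by
        have := congrArg (ℓ i.castSucc) h0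
        simpa [hw, map_add, map_smul, smul_eq_mul] using this
      by_cases hi : i ∈ A
      · have h1 := mul_nonneg hspos.le ((hps i).1 hi)
        have h2 := mul_nonneg hpl.le ((hms i).1 hi)
        have := (add_eq_zero_iff_of_nonneg h1 h2).mp happ
        rcases this with ⟨h3, -⟩
        have := mul_eq_zero.mp h3
        rcases this with h | h
        · exact absurd h hspos.ne'
        · exact h
      · have h1 := mul_nonneg hspos.le (neg_nonneg.mpr ((hps i).2 hi))
        have h2 := mul_nonneg hpl.le (neg_nonneg.mpr ((hms i).2 hi))
        have happ' : s * (-(ℓ i.castSucc vp)) + t * (-(ℓ i.castSucc vm)) = 0 := by linarith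
        have := (add_eq_zero_iff_of_nonneg h1 h2).mp happ'
        rcases this with ⟨h3, -⟩
        rcases mul_eq_zero.mp h3 with h | h
        · exact absurd h hspos.ne'
        · linarith
    exact ⟨⟨w, by simpa [LinearMap.mem_ker] using hwker⟩,
      by simpa [Submodule.coe_eq_zero] using hw0, fun i => hwsigns i⟩
  · rintro ⟨⟨w, hwH⟩, hw0, hsigns⟩
    have hw0' : w ≠ 0 := by
      intro h
      exact hw0 (by simp only [h]; rfl)
    have hwl : ℓ (Fin.last n) w = 0 := hwH
    exact ⟨⟨w, hw0', fun i => hsigns i, le_of_eq hwl.symm⟩,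
      ⟨w, hw0', fun i => hsigns i, le_of_eq hwl⟩⟩

end Step


lemma pascal_sum (m k : ℕ) : ∑ i ∈ Finset.range (k+1), (m+1).choose i
    = ∑ i ∈ Finset.range (k+1), m.choose i + ∑ i ∈ Finset.range k, m.choose i := by
  rw [Finset.sum_range_succ' (fun i => (m+1).choose i), Finset.sum_range_succ' (fun i => m.choose i)]
  simp only [Nat.choose_succ_succ, Nat.choose_zero_right]
  rw [Finset.sum_add_distrib]
  ring

lemma rfeas_empty_of_subsingleton {V : Type} [AddCommGroup V] [Module ℝ V] [Subsingleton V]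
    {n : ℕ} (ℓ : Fin n → V →ₗ[ℝ] ℝ) : RFeas ℓ = ∅ := by
  ext A
  simp only [RFeas, Set.mem_setOf_eq, Set.mem_empty_iff_false, iff_false, not_exists]
  rintro v ⟨hv, -⟩
  exact (hv (Subsingleton.elim v 0)).elim

theorem count_rfeas : ∀ (n : ℕ) (V : Type) (_ : AddCommGroup V), ∀ (_ : Module ℝ V)
    (_ : FiniteDimensional ℝ V) (ℓ : Fin n → V →ₗ[ℝ] ℝ),
    finrank ℝ V ≤ n → RGen ℓ →
    (RFeas ℓ).ncard = 2 * ∑ i ∈ Finset.range (finrank ℝ V), (n - 1).choose i := by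
  intro n
  induction n with
  | zero =>
    intro V _ _ _ ℓ hn hgen
    have h0 : finrank ℝ V = 0 := Nat.le_zero.mp hn
    have : Subsingleton V := finrank_zero_iff.mp h0
    rw [rfeas_empty_of_subsingleton, h0]
    simp
  | succ n IH =>
    intro V iV mV fV ℓ hn hgen
    rcases Nat.eq_zero_or_pos (finrank ℝ V) with h0 | hk1
    · have : Subsingleton V := finrank_zero_iff.mp h0
      rw [rfeas_empty_of_subsingleton, h0]
      simp
    rcases eq_or_lt_of_le hn with heq | hlt
    · -- base case k = n+1 : all feasible
      have hker : ∀ v : V, (∀ i, ℓ i v = 0) → v = 0 :=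
        fun v hv => rgen_common_ker hn hgen hv
      rw [rfeas_univ heq (by omega) ℓ hker, ncard_univ_set, heq]
      rw [Nat.add_sub_cancel, Nat.sum_range_choose]
      rw [pow_succ, mul_comm]
    · -- step case 1 ≤ k ≤ n
      have hkn : finrank ℝ V ≤ n := by omega
      have hgen' : RGen (fun i : Fin n => ℓ i.castSucc) := rgen_init hgen
      have hker' : ∀ v : V, (∀ i : Fin n, ℓ i.castSucc v = 0) → v = 0 :=
        fun v hv => rgen_common_ker hkn hgen' hv
      have hne := rgen_ne_zero hgen hk1 (Fin.last n)
      set H := LinearMap.ker (ℓ (Fin.last n)) with hH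
      have hgen'' : RGen (fun i : Fin n => (ℓ i.castSucc).comp H.subtype) :=
        rgen_restrict hgen hk1
      have hfrH : finrank ℝ ↥H + 1 = finrank ℝ V := finrank_ker_add_one hne
      -- the decomposition
      have e1 : (RFeas ℓ).ncard = (Spl ℓ).ncard + (Smi ℓ).ncard := by
        rw [rfeas_split ℓ, Set.ncard_union_eq (rfeas_split_disjoint ℓ)
          (Set.toFinite _) (Set.toFinite _),
          Set.ncard_image_of_injective _ ipl_inj, Set.ncard_image_of_injective _ imi_inj]
      have e2 : (Spl ℓ ∩ Smi ℓ).ncard + (Spl ℓ ∪ Smi ℓ).ncard = (Spl ℓ).ncard + (Smi ℓ).ncard :=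
        Set.ncard_inter_add_ncard_union _ _ (Set.toFinite _) (Set.toFinite _)
      have e3 := spl_union_smi ℓ
      have e4 := spl_inter_smi ℓ hker'
      have i1 := IH V iV mV fV (fun i : Fin n => ℓ i.castSucc) hkn hgen'
      have i2 := IH ↥H inferInstance inferInstance inferInstance
        (fun i : Fin n => (ℓ i.castSucc).comp H.subtype) (by omega) hgen''
      rw [e1, ← e2, e3, e4, i1, i2]
      -- arithmetic
      obtain ⟨m, hm⟩ : ∃ m, n = m + 1 := ⟨n - 1, by omega⟩
      obtain ⟨k', hk'⟩ : ∃ k', finrank ℝ V = k' + 1 := ⟨finrank ℝ V - 1, by omega⟩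
      have hfrH' : finrank ℝ ↥H = k' := by omega
      subst hm
      rw [hk', hfrH']
      simp only [Nat.add_sub_cancel]
      rw [pascal_sum m k']
      ring

lemma mem_convexHull_image_iff {n : ℕ} {E : Type} [AddCommGroup E] [Module ℝ E]
    (f : Fin n → E) (s : Set (Fin n)) (p : E) :
    p ∈ convexHull ℝ (f '' s) ↔ ∃ w : Fin n → ℝ, (∀ i, 0 ≤ w i) ∧ (∀ i ∉ s, w i = 0) ∧
      (∑ i, w i) = 1 ∧ (∑ i, w i • f i) = p := by
  classical
  constructor
  · intro hp
    rw [_root_.convexHull_eq] at hp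
    obtain ⟨ι, t, w, z, hw0, hw1, hzs, hcm⟩ := hp
    -- t is nonempty since sum of weights is 1
    have htne : t.Nonempty := by
      by_contra h
      rw [Finset.not_nonempty_iff_eq_empty] at h
      rw [h] at hw1; simp at hw1
    obtain ⟨i0, hi0⟩ := htne
    obtain ⟨j0, hj0s, -⟩ := hzs i0 hi0
    have hg : ∀ i ∈ t, ∃ j : Fin n, j ∈ s ∧ f j = z i := by
      intro i hi
      obtain ⟨j, hj, hfj⟩ := hzs i hi
      exact ⟨j, hj, hfj⟩
    set g : ι → Fin n := fun i => if h : i ∈ t then (hg i h).choose else j0 with hgdef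
    have hgs : ∀ i ∈ t, g i ∈ s ∧ f (g i) = z i := by
      intro i hi
      simp only [hgdef, dif_pos hi]
      exact (hg i hi).choose_spec
    set c : Fin n → ℝ := fun j => ∑ i ∈ t, if g i = j then w i else 0 with hcdef
    refine ⟨c, ?_, ?_, ?_, ?_⟩
    · intro j
      apply Finset.sum_nonneg
      intro i hi
      split <;> simp [hw0 i hi]
    · intro j hj
      apply Finset.sum_eq_zero
      intro i hi
      have : g i ≠ j := fun h => hj (h ▸ (hgs i hi).1)
      simp [this]
    · rw [Finset.sum_comm]
      rw [← hw1]
      apply Finset.sum_congr rfl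
      intro i hi
      simp
    · have step1 : ∀ j : Fin n, c j • f j = ∑ i ∈ t, (if g i = j then w i else 0) • f j := by
        intro j
        rw [hcdef]
        rw [Finset.sum_smul]
      calc ∑ j, c j • f j = ∑ j, ∑ i ∈ t, (if g i = j then w i else 0) • f j :=
            Finset.sum_congr rfl (fun j _ => step1 j)
        _ = ∑ i ∈ t, ∑ j, (if g i = j then w i else 0) • f j := Finset.sum_comm
        _ = ∑ i ∈ t, w i • z i := by
            apply Finset.sum_congr rfl
            intro i hi
            have : ∀ j : Fin n, (if g i = j then w i else 0) • f j
                = if g i = j then w i • f j else 0 := by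
              intro j; split <;> simp
            rw [Finset.sum_congr rfl (fun j _ => this j), Finset.sum_ite_eq]
            simp [(hgs i hi).2]
        _ = p := by rw [← Finset.centerMass_eq_of_sum_1 _ _ hw1, hcm]
  · rintro ⟨w, hw0, hws, hw1, hwp⟩
    have h1 : ∑ i ∈ Finset.univ.filter (· ∈ s), w i = 1 := by
      rw [← hw1]
      apply Finset.sum_subset (Finset.filter_subset _ _)
      intro i _ hi
      simp only [Finset.mem_filter, Finset.mem_univ, true_and] at hi
      exact hws i hi
    have hmem : ∀ i ∈ Finset.univ.filter (· ∈ s), f i ∈ f '' s := by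
      intro i hi
      exact ⟨i, by simpa using (Finset.mem_filter.mp hi).2, rfl⟩
    have := Finset.centerMass_mem_convexHull (Finset.univ.filter (· ∈ s))
      (w := w) (fun i _ => hw0 i) (by rw [h1]; norm_num) (z := f) hmem
    rwa [Finset.centerMass_eq_of_sum_1 _ _ h1,
      Finset.sum_subset (Finset.filter_subset _ _) (by
        intro i _ hi
        simp only [Finset.mem_filter, Finset.mem_univ, true_and] at hi
        rw [hws i hi, zero_smul]), hwp] at this

lemma radon_iff_kernel {n : ℕ} {E : Type} [AddCommGroup E] [Module ℝ E]
    (x : Fin n → E) (A : Set (Fin n)) :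
    (convexHull ℝ (x '' A) ∩ convexHull ℝ (x '' Aᶜ)).Nonempty ↔
      ∃ c : Fin n → ℝ, c ≠ 0 ∧ (∑ i, c i • x i) = 0 ∧ (∑ i, c i) = 0 ∧
        ∀ i, (i ∈ A → 0 ≤ c i) ∧ (i ∉ A → c i ≤ 0) := by
  constructor
  · rintro ⟨p, hpA, hpB⟩
    rw [mem_convexHull_image_iff] at hpA hpB
    obtain ⟨a, ha0, has, ha1, hap⟩ := hpA
    obtain ⟨b, hb0, hbs, hb1, hbp⟩ := hpB
    refine ⟨a - b, ?_, ?_, ?_, ?_⟩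
    · obtain ⟨i, -, hi⟩ := Finset.exists_ne_zero_of_sum_ne_zero
        (by rw [ha1]; norm_num : (∑ i, a i) ≠ 0)
      have hiA : i ∈ A := by
        by_contra h
        exact hi (has i h)
      have hbi : b i = 0 := hbs i (by simpa using hiA)
      intro h
      have := congrFun h i
      simp only [Pi.sub_apply, Pi.zero_apply, hbi, sub_zero] at this
      exact hi this
    · simp only [Pi.sub_apply, sub_smul, Finset.sum_sub_distrib, hap, hbp, sub_self]
    · simp only [Pi.sub_apply, Finset.sum_sub_distrib, ha1, hb1, sub_self]
    · intro i
      constructor <;> intro hi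
      · have hbi : b i = 0 := hbs i (by simpa using hi)
        simp [hbi, ha0 i]
      · have hai : a i = 0 := has i hi
        simp [hai, hb0 i]
  · rintro ⟨c, hc0, hcx, hcs, hsigns⟩
    set S : ℝ := ∑ i, max (c i) 0 with hS
    have hSnonneg : ∀ i : Fin n, (0:ℝ) ≤ max (c i) 0 := fun i => le_max_right _ _
    have hSpos : 0 < S := by
      rcases lt_or_eq_of_le (Finset.sum_nonneg (fun i _ => hSnonneg i)) with h | h
      · exact h
      exfalso
      apply hc0
      have hle : ∀ i : Fin n, c i ≤ 0 := by
        intro i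
        have := (Finset.sum_eq_zero_iff_of_nonneg (fun i _ => hSnonneg i)).mp h.symm i (by simp)
        rw [← this]
        exact le_max_left _ _
      funext i
      exact (Finset.sum_eq_zero_iff_of_nonpos (fun i _ => hle i)).mp hcs i (by simp)
    have hmaxneg : ∀ t : ℝ, max (-t) 0 = max t 0 - t := by
      intro t
      rcases le_total t 0 with h | h
      · rw [max_eq_left (by linarith), max_eq_right h]; ring
      · rw [max_eq_right (by linarith), max_eq_left h]; ring
    set p : E := ∑ i, (max (c i) 0 / S) • x i with hp
    refine ⟨p, ?_, ?_⟩
    · rw [mem_convexHull_image_iff]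
      refine ⟨fun i => max (c i) 0 / S, fun i => by positivity, ?_, ?_, rfl⟩
      · intro i hi
        show (max (c i) 0) / S = 0
        rw [max_eq_right ((hsigns i).2 hi)]
        simp
      · rw [← Finset.sum_div]
        field_simp
        exact hS.symm
    · rw [mem_convexHull_image_iff]
      refine ⟨fun i => max (-(c i)) 0 / S, fun i => by positivity, ?_, ?_, ?_⟩
      · intro i hi
        simp only [Set.mem_compl_iff, not_not] at hi
        show (max (-(c i)) 0) / S = 0
        rw [max_eq_right (by simpa using (hsigns i).1 hi)]
        simp
      · simp only [hmaxneg]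
        rw [← Finset.sum_div, Finset.sum_sub_distrib, hcs, sub_zero]
        field_simp
        exact hS.symm
      · simp only [hmaxneg, sub_div, sub_smul, Finset.sum_sub_distrib, ← hp]
        have : ∑ i, (c i / S) • x i = 0 := by
          have : ∑ i, (c i / S) • x i = (S⁻¹ : ℝ) • ∑ i, c i • x i := by
            rw [Finset.smul_sum]
            apply Finset.sum_congr rfl
            intro i _
            rw [smul_smul]
            congr 1
            field_simp
          rw [this, hcx, smul_zero]
        rw [this, sub_zero]


lemma sum_range_eq_sum_Icc (d n : ℕ) (h : d + 2 ≤ n) :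
    ∑ i ∈ Finset.range (n - d - 1), (n-1).choose i
      = ∑ i ∈ Finset.Icc (d+1) (n-1), (n-1).choose i := by
  apply Finset.sum_nbij' (i := fun a => n - 1 - a) (j := fun b => n - 1 - b)
  · intro a ha
    simp only [Finset.mem_range] at ha
    simp only [Finset.mem_Icc]
    omega
  · intro b hb
    simp only [Finset.mem_Icc] at hb
    simp only [Finset.mem_range]
    omega
  · intro a ha
    simp only [Finset.mem_range] at ha
    omega
  · intro b hb
    simp only [Finset.mem_Icc] at hb
    omega
  · intro a ha
    simp only [Finset.mem_range] at ha
    rw [Nat.choose_symm (by omega)]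

theorem count_radon_partitions (d n : ℕ) (hn : d + 2 ≤ n)
    (x : Fin n → EuclideanSpace ℝ (Fin d))
    (hgen : ∀ s : Finset (Fin n), s.card = d + 1 →
      AffineIndependent ℝ (fun i : s => x i)) :
    {p : Set (Set (Fin n)) | ∃ A : Set (Fin n), p = {A, Aᶜ} ∧
      (convexHull ℝ (x '' A) ∩ convexHull ℝ (x '' Aᶜ)).Nonempty}.ncard
      = ∑ i ∈ Finset.Icc (d + 1) (n - 1), (n - 1).choose i := by
  classical
  -- F1 : the lifted points are linearly independent on (d+1)-subsets
  have hy_indep : ∀ s : Finset (Fin n), s.card = d + 1 →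
      LinearIndependent ℝ (fun i : s => ((x i, 1) : EuclideanSpace ℝ (Fin d) × ℝ)) := by
    intro s hs
    rw [Fintype.linearIndependent_iff]
    intro g hg
    have h2 : ∑ i : s, g i = 0 := by
      have := congrArg Prod.snd hg
      simpa [Prod.snd_sum] using this
    have h1 : ∑ i : s, g i • x i = 0 := by
      have := congrArg Prod.fst hg
      simpa [Prod.fst_sum] using this
    have := (affineIndependent_iff_of_fintype ℝ (fun i : s => x i)).mp (hgen s hs) g
      (by simpa using h2)
    apply this
    rw [Finset.weightedVSub_eq_linear_combination _ (by simpa using h2)]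
    simpa using h1
  have hfrE : finrank ℝ (EuclideanSpace ℝ (Fin d)) = d := finrank_euclideanSpace_fin
  set T1 : (Fin n → ℝ) →ₗ[ℝ] EuclideanSpace ℝ (Fin d) := ∑ i, LinearMap.smulRight (LinearMap.proj i) (x i) with hT1
  set T2 : (Fin n → ℝ) →ₗ[ℝ] ℝ := ∑ i, LinearMap.proj i with hT2
  set T : (Fin n → ℝ) →ₗ[ℝ] (EuclideanSpace ℝ (Fin d)) × ℝ := LinearMap.prod T1 T2 with hT
  have hT1app : ∀ c : Fin n → ℝ, T1 c = ∑ i, c i • x i := by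
    intro c
    simp [hT1, LinearMap.sum_apply]
  have hT2app : ∀ c : Fin n → ℝ, T2 c = ∑ i, c i := by
    intro c
    simp [hT2, LinearMap.sum_apply]
  have hTapp : ∀ c : Fin n → ℝ, T c = (∑ i, c i • x i, ∑ i, c i) := by
    intro c
    simp [hT, LinearMap.prod_apply, hT1app, hT2app]
  have hTsingle : ∀ i : Fin n, T (Pi.single i 1) = (x i, 1) := by
    intro i
    rw [hTapp]
    congr 1
    · rw [Finset.sum_eq_single i]
      · simp
      · intro b _ hb; simp [Pi.single_eq_of_ne hb]
      · simp
    · simp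
  -- F2 : T is surjective
  have hfrProd : finrank ℝ ((EuclideanSpace ℝ (Fin d)) × ℝ) = d + 1 := by
    rw [Module.finrank_prod, hfrE, finrank_self]
  have hTsurj : LinearMap.range T = ⊤ := by
    obtain ⟨s, -, hscard⟩ := Finset.exists_subset_card_eq
      (show d + 1 ≤ (Finset.univ : Finset (Fin n)).card by simp; omega)
    apply Submodule.eq_top_of_finrank_eq
    refine le_antisymm (Submodule.finrank_le _) ?_
    have hsp : Submodule.span ℝ (Set.range (fun i : s => ((x i, 1) : (EuclideanSpace ℝ (Fin d)) × ℝ)))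
        ≤ LinearMap.range T := by
      rw [Submodule.span_le]
      rintro - ⟨i, rfl⟩
      exact ⟨Pi.single i 1, hTsingle i⟩
    have := finrank_span_eq_card (hy_indep s hscard)
    rw [Fintype.card_coe, hscard] at this
    rw [hfrProd, ← this]
    exact Submodule.finrank_mono hsp
  set K := LinearMap.ker T with hK
  set ℓ : Fin n → ↥K →ₗ[ℝ] ℝ :=
    fun i => (LinearMap.proj i : (Fin n → ℝ) →ₗ[ℝ] ℝ).comp K.subtype with hℓ
  -- F3 : dimension of K
  have hdim : finrank ℝ ↥K + (d + 1) = n := by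
    have := T.finrank_range_add_finrank_ker
    rw [← hK] at this
    rw [hTsurj, finrank_top, hfrProd] at this
    simp only [Module.finrank_pi, Fintype.card_fin] at this
    omega
  -- F4 : genericity
  have hgenK : RGen ℓ := by
    intro c hc hc0
    set φ : (Fin n → ℝ) →ₗ[ℝ] ℝ := ∑ i, c i • (LinearMap.proj i) with hφ
    have hφapp : ∀ w : Fin n → ℝ, φ w = ∑ i, c i * w i := by
      intro w
      simp [hφ, LinearMap.sum_apply]
    have hφK : ∀ w ∈ K, φ w = 0 := by
      intro w hw
      have := congrFun (congrArg DFunLike.coe hc) ⟨w, hw⟩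
      simp only [LinearMap.zero_apply] at this
      rw [← this, hφapp]
      simp [hℓ, LinearMap.sum_apply]
    obtain ⟨σ, hσ⟩ := T.exists_rightInverse_of_surjective hTsurj
    set ψ : ((EuclideanSpace ℝ (Fin d)) × ℝ) →ₗ[ℝ] ℝ := φ.comp σ with hψ
    have hfact : ∀ w : Fin n → ℝ, φ w = ψ (T w) := by
      intro w
      have hker : w - σ (T w) ∈ K := by
        rw [hK, LinearMap.mem_ker, map_sub]
        have := congrFun (congrArg DFunLike.coe hσ) (T w)
        simp only [LinearMap.comp_apply, LinearMap.id_apply] at this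
        rw [this, sub_self]
      have := hφK _ hker
      rw [map_sub, sub_eq_zero] at this
      rw [this]
      rfl
    have hcψ : ∀ i : Fin n, c i = ψ (x i, 1) := by
      intro i
      rw [← hTsingle i, ← hfact, hφapp]
      rw [Finset.sum_eq_single i]
      · simp
      · intro b _ hb; simp [Pi.single_eq_of_ne hb]
      · simp
    by_contra hcon
    push_neg at hcon
    -- zeros of c form a large set
    set supp : Finset (Fin n) := Finset.univ.filter (fun i => c i ≠ 0) with hsupp
    have hsupp_eq : {i | c i ≠ 0}.ncard = supp.card := by
      rw [← Set.ncard_coe_finset]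
      congr 1
      ext i
      simp [hsupp]
    set zer : Finset (Fin n) := Finset.univ.filter (fun i => c i = 0) with hzer
    have hcards : zer.card + supp.card = n := by
      have := Finset.card_filter_add_card_filter_not
        (s := Finset.univ) (p := fun i => c i = 0)
      simpa [hzer, hsupp] using this
    have hzcard : d + 1 ≤ zer.card := by
      rw [hsupp_eq] at hcon
      omega
    obtain ⟨s, hssub, hscard⟩ := Finset.exists_subset_card_eq hzcard
    have hψne : ψ ≠ 0 := by
      intro h
      apply hc0
      funext i
      rw [hcψ i, h]
      rfl
    have hker_rank : finrank ℝ ↥(LinearMap.ker ψ) + 1 = d + 1 := by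
      rw [← hfrProd]
      exact finrank_ker_add_one hψne
    have hsp : Submodule.span ℝ (Set.range (fun i : s => ((x i, 1) : (EuclideanSpace ℝ (Fin d)) × ℝ)))
        ≤ LinearMap.ker ψ := by
      rw [Submodule.span_le]
      rintro - ⟨i, rfl⟩
      rw [SetLike.mem_coe, LinearMap.mem_ker, ← hcψ i]
      have := hssub i.2
      simp only [hzer, Finset.mem_filter] at this
      exact this.2
    have h1 := finrank_span_eq_card (hy_indep s hscard)
    rw [Fintype.card_coe, hscard] at h1
    have h2 := Submodule.finrank_mono hsp
    rw [h1] at h2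
    omega
  -- apply the counting theorem
  have hcount := count_rfeas n ↥K inferInstance inferInstance inferInstance ℓ (by omega) hgenK
  have hfr : finrank ℝ ↥K = n - d - 1 := by omega
  rw [hfr] at hcount
  -- identify the Radon set with RFeas
  set R : Set (Set (Fin n)) :=
    {A | (convexHull ℝ (x '' A) ∩ convexHull ℝ (x '' Aᶜ)).Nonempty} with hR
  have hReq : R = RFeas ℓ := by
    ext A
    rw [hR, Set.mem_setOf_eq, radon_iff_kernel x A]
    constructor
    · rintro ⟨c, hc0, hcx, hcs, hsigns⟩
      have hcK : c ∈ K := by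
        rw [hK, LinearMap.mem_ker, hTapp, hcx, hcs]
        rfl
      exact ⟨⟨c, hcK⟩, by simpa [Submodule.mk_eq_zero] using hc0, fun i => hsigns i⟩
    · rintro ⟨⟨c, hcK⟩, hc0, hsigns⟩
      rw [hK, LinearMap.mem_ker, hTapp] at hcK
      have h1 : ∑ i, c i • x i = 0 := congrArg Prod.fst hcK
      have h2 : ∑ i, c i = 0 := congrArg Prod.snd hcK
      refine ⟨c, ?_, h1, h2, fun i => hsigns i⟩
      intro h
      exact hc0 (by simp only [h]; rfl)
  -- bookkeeping on unordered pairs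
  have hi0 : 0 < n := by omega
  set i0 : Fin n := ⟨0, hi0⟩ with hi0def
  set R0 : Set (Set (Fin n)) := R ∩ {A | i0 ∈ A} with hR0
  set R1 : Set (Set (Fin n)) := R ∩ {A | i0 ∉ A} with hR1
  have hsymm : ∀ A : Set (Fin n), A ∈ R → Aᶜ ∈ R := by
    rintro A ⟨p, hp⟩
    refine ⟨p, ?_⟩
    rwa [compl_compl, Set.inter_comm]
  have htarget : {p : Set (Set (Fin n)) | ∃ A : Set (Fin n), p = {A, Aᶜ} ∧
      (convexHull ℝ (x '' A) ∩ convexHull ℝ (x '' Aᶜ)).Nonempty}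
      = (fun A => ({A, Aᶜ} : Set (Set (Fin n)))) '' R0 := by
    ext p
    simp only [Set.mem_setOf_eq, Set.mem_image]
    constructor
    · rintro ⟨A, rfl, hA⟩
      by_cases h0 : i0 ∈ A
      · exact ⟨A, ⟨hA, h0⟩, rfl⟩
      · refine ⟨Aᶜ, ⟨hsymm A hA, by simpa using h0⟩, ?_⟩
        simp only [compl_compl]
        exact (Set.pair_comm A Aᶜ).symm
    · rintro ⟨A, ⟨hA, -⟩, rfl⟩
      exact ⟨A, rfl, hA⟩
  have hinj : Set.InjOn (fun A => ({A, Aᶜ} : Set (Set (Fin n)))) R0 := by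
    rintro A ⟨-, hA0⟩ B ⟨-, hB0⟩ hAB
    simp only at hAB
    have hmem : A ∈ ({B, Bᶜ} : Set (Set (Fin n))) := by
      rw [← hAB]; left; rfl
    rcases hmem with h | h
    · exact h
    · exfalso
      rw [h] at hA0
      exact hA0 hB0
  have hcompl_img : compl '' R0 = R1 := by
    ext B
    constructor
    · rintro ⟨A, ⟨hA, hA0⟩, rfl⟩
      exact ⟨hsymm A hA, by simpa using hA0⟩
    · rintro ⟨hB, hB0⟩
      exact ⟨Bᶜ, ⟨hsymm B hB, by simpa using hB0⟩, compl_compl B⟩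
  have hsplitR : R = R0 ∪ R1 := by
    ext A
    constructor
    · intro h
      by_cases h0 : i0 ∈ A
      · exact Or.inl ⟨h, h0⟩
      · exact Or.inr ⟨h, h0⟩
    · rintro (⟨h, -⟩ | ⟨h, -⟩) <;> exact h
  have hdisj : Disjoint R0 R1 := by
    rw [Set.disjoint_left]
    rintro A ⟨-, h0⟩ ⟨-, h1⟩
    exact h1 h0
  have hRcard : R.ncard = R0.ncard + R1.ncard := by
    rw [hsplitR, Set.ncard_union_eq hdisj (Set.toFinite _) (Set.toFinite _)]
  have hR01 : R1.ncard = R0.ncard := by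
    rw [← hcompl_img, Set.ncard_image_of_injective _ compl_injective]
  have hRval : R.ncard = 2 * ∑ i ∈ Finset.range (n - d - 1), (n-1).choose i := by
    rw [hReq]; exact hcount
  rw [htarget, Set.ncard_image_of_injOn hinj, ← sum_range_eq_sum_Icc d n hn]
  omega
end
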